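/- (Non-singularity of the optimal incentive controller.) Under the setup of the incentive control problem, let θ > 0, let u : [0,T] → ℝ be continuous, let y = (x,n) : [0,T] → (0,1)² solve the controlled state equation ẋ = x(1-x)g(x,n) + x²(1-x)(1-n)u, ṅ = n(1-n)(-1+(1+θ)x), and let λ = (λ_x,λ_n) : [0,T] → ℝ² solve the costate equation λ̇ = −∂H/∂y along (y,λ,u). Define the switching function φ(t) = λ_x(t)·x(t)²(1-x(t))(1-n(t)). If t₀ ∈ (0,T) satisfies φ(t₀) = 0 and λ(t₀) ≠ (0,0), then φ'(t₀) ≠ 0; consequently t₀ is an isolated zero of φ, so the bang-bang control u*(t) = u_m·sign(φ(t)) switches between the values −u_m and u_m at isolated points of any interval on which λ does not vanish. -/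

import Mathlib

/-- Non-singularity of the optimal incentive controller.  Along any solution
of the controlled state equation and the costate equation with state in (0,1)², if the
switching function φ(t) = λ_x(t)·x(t)²(1−x(t))(1−n(t)) vanishes at t₀ ∈ (0,T) while
λ(t₀) ≠ (0,0), then φ'(t₀) ≠ 0; consequently t₀ is an isolated zero of φ, so the
bang-bang control u*(t) = u_m·sign(φ(t)) takes only the values ±u_m near t₀
(switching at isolated points). -/
theorem optimal_incentive_controller_nonsingular
    (θ R₀ S₀ T₀ P₀ R₁ S₁ T₁ P₁ T um : ℝ) (hθ : 0 < θ) (hum : 0 < um)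
    (g : ℝ × ℝ → ℝ)
    (hg : ∀ a b : ℝ, g (a, b)
      = b * ((R₁ - T₁) * a + (S₁ - P₁) * (1 - a))
        + (1 - b) * ((R₀ - T₀) * a + (S₀ - P₀) * (1 - a)))
    (u : ℝ → ℝ) (hu : ContinuousOn u (Set.Icc 0 T))
    (H : ℝ × ℝ → ℝ × ℝ → ℝ → ℝ)
    (hH : ∀ a b la lb v : ℝ, H (a, b) (la, lb) v
      = la * (a * (1 - a) * (g (a, b) + a * (1 - b) * v))
        + lb * (b * (1 - b) * (-1 + (1 + θ) * a)) + b ^ 2)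
    (x n lx ln : ℝ → ℝ)
    (hmem : ∀ t ∈ Set.Icc (0 : ℝ) T,
      x t ∈ Set.Ioo (0 : ℝ) 1 ∧ n t ∈ Set.Ioo (0 : ℝ) 1)
    (hx : ∀ t ∈ Set.Icc (0 : ℝ) T,
      HasDerivAt x (x t * (1 - x t) * g (x t, n t)
        + (x t) ^ 2 * (1 - x t) * (1 - n t) * u t) t)
    (hn : ∀ t ∈ Set.Icc (0 : ℝ) T,
      HasDerivAt n (n t * (1 - n t) * (-1 + (1 + θ) * x t)) t)
    (hlx : ∀ t ∈ Set.Icc (0 : ℝ) T,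
      HasDerivAt lx (-(deriv (fun a => H (a, n t) (lx t, ln t) (u t)) (x t))) t)
    (hln : ∀ t ∈ Set.Icc (0 : ℝ) T,
      HasDerivAt ln (-(deriv (fun b => H (x t, b) (lx t, ln t) (u t)) (n t))) t)
    (φ : ℝ → ℝ)
    (hφ : ∀ t : ℝ, φ t = lx t * ((x t) ^ 2 * (1 - x t) * (1 - n t)))
    (t₀ : ℝ) (ht₀ : t₀ ∈ Set.Ioo (0 : ℝ) T)
    (hzero : φ t₀ = 0) (hlam : (lx t₀, ln t₀) ≠ (0, 0)) :
    deriv φ t₀ ≠ 0 ∧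
    (∀ᶠ s in nhdsWithin t₀ {t₀}ᶜ, φ s ≠ 0) ∧
    (∀ᶠ s in nhdsWithin t₀ {t₀}ᶜ,
      um * Real.sign (φ s) = um ∨ um * Real.sign (φ s) = -um) := by
  obtain ⟨ht0, ht0T⟩ := ht₀
  have ht₀' : t₀ ∈ Set.Icc (0:ℝ) T := ⟨le_of_lt ht0, le_of_lt ht0T⟩
  obtain ⟨hxm, hnm⟩ := hmem t₀ ht₀'
  have hc : 0 < (x t₀) ^ 2 * (1 - x t₀) * (1 - n t₀) := by
    have h1 : 0 < x t₀ := hxm.1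
    have h2 : x t₀ < 1 := hxm.2
    have h3 : n t₀ < 1 := hnm.2
    exact mul_pos (mul_pos (pow_pos h1 2) (sub_pos.mpr h2)) (sub_pos.mpr h3)
  have hlx0 : lx t₀ = 0 := by
    have h := hzero
    rw [hφ] at h
    rcases mul_eq_zero.mp h with h | h
    · exact h
    · exact absurd h (ne_of_gt hc)
  have hln0 : ln t₀ ≠ 0 := by
    intro h
    exact hlam (by simp [hlx0, h])
  -- derivative of H in the first state variable at t₀
  have hHa : deriv (fun a => H (a, n t₀) (lx t₀, ln t₀) (u t₀)) (x t₀)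
      = ln t₀ * (n t₀ * (1 - n t₀) * (1 + θ)) := by
    have hfun : (fun a => H (a, n t₀) (lx t₀, ln t₀) (u t₀))
        = fun a => ln t₀ * (n t₀ * (1 - n t₀) * (-1 + (1 + θ) * a)) + (n t₀) ^ 2 := by
      funext a
      rw [hH, hlx0]
      ring
    rw [hfun]
    have hlin : HasDerivAt (fun a : ℝ => -1 + (1 + θ) * a) (1 + θ) (x t₀) := by
      simpa using ((hasDerivAt_id (x t₀)).const_mul (1 + θ)).const_add (-1)
    have h1 : HasDerivAt
        (fun a : ℝ => ln t₀ * (n t₀ * (1 - n t₀) * (-1 + (1 + θ) * a)) + (n t₀) ^ 2)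
        (ln t₀ * (n t₀ * (1 - n t₀) * (1 + θ))) (x t₀) := by
      simpa using ((hlin.const_mul (n t₀ * (1 - n t₀))).const_mul (ln t₀)).add_const ((n t₀) ^ 2)
    exact h1.deriv
  have hlx' : HasDerivAt lx (-(ln t₀ * (n t₀ * (1 - n t₀) * (1 + θ)))) t₀ := by
    have h := hlx t₀ ht₀'
    rwa [hHa] at h
  have hxd := hx t₀ ht₀'
  have hnd := hn t₀ ht₀'
  have hψ := ((hxd.pow 2).mul ((hasDerivAt_const t₀ (1:ℝ)).sub hxd)).mul
      ((hasDerivAt_const t₀ (1:ℝ)).sub hnd)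
  have hφd := hlx'.mul hψ
  have hφfun : φ = fun t => lx t * ((x t) ^ 2 * (1 - x t) * (1 - n t)) := funext hφ
  set d : ℝ := -(ln t₀ * (n t₀ * (1 - n t₀) * (1 + θ))) * ((x t₀) ^ 2 * (1 - x t₀) * (1 - n t₀))
    with hd_def
  have hφderiv : HasDerivAt φ d t₀ := by
    rw [hφfun]
    refine hφd.congr_deriv ?_
    rw [hd_def]
    simp only [Pi.mul_apply, Pi.sub_apply, Pi.pow_apply]
    rw [hlx0]
    ring
  have hd : d ≠ 0 := by
    have h1 : ln t₀ * (n t₀ * (1 - n t₀) * (1 + θ)) ≠ 0 := by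
      have h2 : 0 < n t₀ := hnm.1
      have h3 : n t₀ < 1 := hnm.2
      have h4 : 0 < n t₀ * (1 - n t₀) * (1 + θ) :=
        mul_pos (mul_pos h2 (sub_pos.mpr h3)) (by linarith)
      exact mul_ne_zero hln0 (ne_of_gt h4)
    exact mul_ne_zero (neg_ne_zero.mpr h1) (ne_of_gt hc)
  have hderiv_ne : deriv φ t₀ ≠ 0 := by
    rw [hφderiv.deriv]; exact hd
  have hslope := hasDerivAt_iff_tendsto_slope.mp hφderiv
  have hne : ∀ᶠ s in nhdsWithin t₀ {t₀}ᶜ, φ s ≠ 0 := by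
    have hev : ∀ᶠ z in nhds d, z ≠ 0 := eventually_ne_nhds hd
    filter_upwards [hslope.eventually hev] with s hs h0
    apply hs
    simp [slope_def_field, h0, hzero]
  refine ⟨hderiv_ne, hne, ?_⟩
  filter_upwards [hne] with s hs
  rcases lt_or_gt_of_ne hs with h | h
  · right
    rw [Real.sign_of_neg h]
    ring
  · left
    rw [Real.sign_of_pos h]
    ring
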